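/- arXiv:2001.09649 — 4 statements merged into one kernel-verified Lean document; each statement's English description precedes it below -/
import Mathlib

section
/- Every post-fixed point S of fsim (i.e., every S with S ⊆ fsim(S)) is contained in the full-simulation relation S≺ = { (P,Q) | ∀ P', P →_L* P' ∧ P' irreducible → ∃ Q', Q →_R* Q' ∧ (P',Q') ∈ B }. -/
/-- A state is irreducible w.r.t. a transition relation if it has no successor. -/
def Irred {St : Type} (T : St → St → Prop) (P : St) : Prop := ∀ P', ¬ T P P'

/-- The `fsim` operator on relations between left and right states. -/
def fsim {StL StR : Type} (L : StL → StL → Prop) (R : StR → StR → Prop)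
    (B : StL → StR → Prop) (S : StL → StR → Prop) : StL → StR → Prop :=
  fun P Q =>
    (Irred L P → ∃ Q', Relation.ReflTransGen R Q Q' ∧ B P Q') ∧
    (¬ Irred L P → ∀ P', L P P' → ∃ Q', Relation.ReflTransGen R Q Q' ∧ S P' Q')


/-- The full-simulation relation. -/
def Sprec {StL StR : Type} (L : StL → StL → Prop) (R : StR → StR → Prop)
    (B : StL → StR → Prop) : StL → StR → Prop :=
  fun P Q => ∀ P', Relation.ReflTransGen L P P' ∧ Irred L P' →
    ∃ Q', Relation.ReflTransGen R Q Q' ∧ B P' Q'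

theorem postfixed_le_Sprec {StL StR : Type} (L : StL → StL → Prop) (R : StR → StR → Prop)
    (B : StL → StR → Prop) (S : StL → StR → Prop)
    (hS : ∀ P Q, S P Q → fsim L R B S P Q) :
    ∀ P Q, S P Q → Sprec L R B P Q := by
  intro P Q hPQ P' ⟨hsteps, hirr⟩
  induction hsteps using Relation.ReflTransGen.head_induction_on generalizing Q with
  | refl => exact (hS _ Q hPQ).1 hirr
  | head hstep _ ih =>
    rename_i a b _
    have hni : ¬ Irred L a := fun h => h b hstep
    obtain ⟨Q', hQQ', hS'⟩ := (hS _ Q hPQ).2 hni b hstep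
    obtain ⟨Q'', hQ'Q'', hB⟩ := ih Q' hS'
    exact ⟨Q'', hQQ'.trans hQ'Q'', hB⟩
end

section
/- Define S⪯ = { (P,Q) | (∀ P', P →_L* P' ∧ P' irreducible → ∃ Q', Q →_R* Q' ∧ (P',Q') ∈ B) ∨ (Q diverges) }, where Q diverges means there exists an infinite →_R-sequence starting from Q. Then S⪯ is a post-fixed point of the operator psim: S⪯ ⊆ psim(S⪯). -/
/-- A state diverges if there is an infinite transition sequence starting from it. -/
def Diverges {St : Type} (T : St → St → Prop) (Q : St) : Prop :=
  ∃ g : ℕ → St, g 0 = Q ∧ ∀ n, T (g n) (g (n + 1))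

/-- The `psim` operator on relations between left and right states. -/
def psim {StL StR : Type} (L : StL → StL → Prop) (R : StR → StR → Prop)
    (B : StL → StR → Prop) (S : StL → StR → Prop) : StL → StR → Prop :=
  fun P Q =>
    ((Irred L P → ∃ Q', Relation.ReflTransGen R Q Q' ∧ B P Q') ∧
     (¬ Irred L P → ∀ P', L P P' → ∃ Q', Relation.ReflTransGen R Q Q' ∧ S P' Q')) ∨
    (∃ Q', R Q Q' ∧ S P Q')

/-- The partial-simulation relation. -/
def Spreq {StL StR : Type} (L : StL → StL → Prop) (R : StR → StR → Prop)
    (B : StL → StR → Prop) : StL → StR → Prop :=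
  fun P Q =>
    (∀ P', Relation.ReflTransGen L P P' ∧ Irred L P' →
      ∃ Q', Relation.ReflTransGen R Q Q' ∧ B P' Q') ∨
    Diverges R Q

theorem Spreq_postfixed {StL StR : Type} (L : StL → StL → Prop) (R : StR → StR → Prop)
    (B : StL → StR → Prop) :
    ∀ P Q, Spreq L R B P Q → psim L R B (Spreq L R B) P Q := by
  intro P Q h
  cases h with
  | inl h =>
    left
    constructor
    · intro hirr
      exact h P ⟨Relation.ReflTransGen.refl, hirr⟩
    · intro _ P' hPP'
      refine ⟨Q, Relation.ReflTransGen.refl, Or.inl ?_⟩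
      intro P'' ⟨hstep, hirr⟩
      exact h P'' ⟨Relation.ReflTransGen.head hPP' hstep, hirr⟩
  | inr h =>
    obtain ⟨g, hg0, hg⟩ := h
    right
    refine ⟨g 1, hg0 ▸ hg 0, Or.inr ⟨fun n => g (n + 1), rfl, fun n => hg (n + 1)⟩⟩
end

section
/- If C = { (P',Q') | Reach⁺((P',Q'), S_C) } for some fixed relation S_C, then CoReach((P,Q),C) implies Reach⁺((P,Q),S_C) for all pairs (P,Q); consequently f_C(S) ⊆ f_∅(S ∪ S_C). -/
/-- `CoReach (P,Q) C`: some right state reachable from `Q` pairs with `P` in `C`. -/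
def CoReach {StL StR : Type} (R : StR → StR → Prop)
    (C : StL → StR → Prop) (P : StL) (Q : StR) : Prop :=
  ∃ Q', Relation.ReflTransGen R Q Q' ∧ C P Q'

/-- `ReachPlus (P,Q) S`: `P` is reducible and every left step is matched. -/
def ReachPlus {StL StR : Type} (L : StL → StL → Prop) (R : StR → StR → Prop)
    (S : StL → StR → Prop) (P : StL) (Q : StR) : Prop :=
  (∃ P', L P P') ∧
    ∀ P', L P P' → ∃ Q', Relation.ReflTransGen R Q Q' ∧ S P' Q'

/-- The operator `f_C`. -/
def fC {StL StR : Type} (L : StL → StL → Prop) (R : StR → StR → Prop)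
    (C : StL → StR → Prop) (S : StL → StR → Prop) : StL → StR → Prop :=
  fun P Q => CoReach R C P Q ∨ ReachPlus L R S P Q

theorem fC_coreach {StL StR : Type} (L : StL → StL → Prop) (R : StR → StR → Prop)
    (SC : StL → StR → Prop) (C : StL → StR → Prop)
    (hC : ∀ P Q, C P Q ↔ ReachPlus L R SC P Q) :
    (∀ P Q, CoReach R C P Q → ReachPlus L R SC P Q) ∧
    (∀ (S : StL → StR → Prop) (P : StL) (Q : StR),
      fC L R C S P Q → fC L R (fun _ _ => False) (fun p q => S p q ∨ SC p q) P Q) := by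
  have key : ∀ P Q, CoReach R C P Q → ReachPlus L R SC P Q := by
    rintro P Q ⟨Q', hQQ', hCPQ'⟩
    obtain ⟨hred, hmatch⟩ := (hC P Q').mp hCPQ'
    exact ⟨hred, fun P' hL => by
      obtain ⟨Q'', hQ'Q'', hS⟩ := hmatch P' hL
      exact ⟨Q'', hQQ'.trans hQ'Q'', hS⟩⟩
  refine ⟨key, fun S P Q h => ?_⟩
  rcases h with h | ⟨hred, hmatch⟩
  · obtain ⟨hred, hmatch⟩ := key P Q h
    exact Or.inr ⟨hred, fun P' hL => by
      obtain ⟨Q', h1, h2⟩ := hmatch P' hL; exact ⟨Q', h1, Or.inr h2⟩⟩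
  · exact Or.inr ⟨hred, fun P' hL => by
      obtain ⟨Q', h1, h2⟩ := hmatch P' hL; exact ⟨Q', h1, Or.inl h2⟩⟩
end

section
/- If a pair (P,Q) belongs to the greatest fixed point of psim and P terminates in P' (i.e., P →_L* P' with P' irreducible), then either there exists Q' with Q →_R* Q' and (P',Q') ∈ B, or Q diverges. -/
lemma diverges_of_step {St : Type} {R : St → St → Prop} {Q Q' : St}
    (h : R Q Q') (hd : Diverges R Q') : Diverges R Q := by
  obtain ⟨g, h0, hs⟩ := hd
  refine ⟨fun n => match n with | 0 => Q | n+1 => g n, rfl, ?_⟩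
  intro n
  cases n with
  | zero => simpa [h0] using h
  | succ n => exact hs n

lemma diverges_of_rtg {St : Type} {R : St → St → Prop} {Q Q' : St}
    (h : Relation.ReflTransGen R Q Q') (hd : Diverges R Q') : Diverges R Q := by
  induction h using Relation.ReflTransGen.head_induction_on with
  | refl => exact hd
  | head hst _ ih => exact diverges_of_step hst ih

lemma reach_left {StL StR : Type} {L : StL → StL → Prop} {R : StR → StR → Prop}
    {B S : StL → StR → Prop} (hS : ∀ P' Q', S P' Q' → psim L R B S P' Q')
    {P : StL} {Q : StR} (hPQ : S P Q) (hnd : ¬ Diverges R Q) :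
    ∃ Q0, Relation.ReflTransGen R Q Q0 ∧ S P Q0 ∧
      ((Irred L P → ∃ Q', Relation.ReflTransGen R Q0 Q' ∧ B P Q') ∧
       (¬ Irred L P → ∀ P', L P P' → ∃ Q', Relation.ReflTransGen R Q0 Q' ∧ S P' Q')) := by
  by_contra h
  have step : ∀ Q0 : {Q0 // Relation.ReflTransGen R Q Q0 ∧ S P Q0},
      ∃ Q1 : {Q0 // Relation.ReflTransGen R Q Q0 ∧ S P Q0}, R Q0.1 Q1.1 := by
    rintro ⟨Q0, hr, hs⟩
    rcases hS P Q0 hs with hl | ⟨Q1, hQ1, hS1⟩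
    · exact absurd ⟨Q0, hr, hs, hl⟩ h
    · exact ⟨⟨Q1, hr.tail hQ1, hS1⟩, hQ1⟩
  choose next hnext using step
  let g : ℕ → {Q0 // Relation.ReflTransGen R Q Q0 ∧ S P Q0} :=
    fun n => Nat.rec ⟨Q, Relation.ReflTransGen.refl, hPQ⟩ (fun _ q => next q) n
  exact hnd ⟨fun n => (g n).1, rfl, fun n => hnext (g n)⟩

theorem gfp_psim_terminating {StL StR : Type} (L : StL → StL → Prop) (R : StR → StR → Prop)
    (B : StL → StR → Prop) (P : StL) (Q : StR)
    (hgfp : ∃ S : StL → StR → Prop, (∀ P' Q', S P' Q' → psim L R B S P' Q') ∧ S P Q)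
    (P' : StL) (hrun : Relation.ReflTransGen L P P') (hirr : Irred L P') :
    (∃ Q', Relation.ReflTransGen R Q Q' ∧ B P' Q') ∨ Diverges R Q := by
  obtain ⟨S, hS, hPQ⟩ := hgfp
  induction hrun using Relation.ReflTransGen.head_induction_on generalizing Q with
  | refl =>
    by_cases hd : Diverges R Q
    · exact Or.inr hd
    · obtain ⟨Q0, hr, _, hleft, _⟩ := reach_left hS hPQ hd
      obtain ⟨Q', hr', hB⟩ := hleft hirr
      exact Or.inl ⟨Q', hr.trans hr', hB⟩
  | head hab _ ih =>
    by_cases hd : Diverges R Q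
    · exact Or.inr hd
    · obtain ⟨Q0, hr, _, _, hstep⟩ := reach_left hS hPQ hd
      have hnirr : ¬ Irred L _ := fun h => h _ hab
      obtain ⟨Q1, hr1, hS1⟩ := hstep hnirr _ hab
      rcases ih Q1 hS1 with ⟨Q', hr', hB⟩ | hdiv
      · exact Or.inl ⟨Q', (hr.trans hr1).trans hr', hB⟩
      · exact Or.inr (diverges_of_rtg (hr.trans hr1) hdiv)
end
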